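/- Let S, n₁, n₂ ≥ 1 and m₁,…,m_S ≥ 1, let K₀ ⊆ ℝ^{n₁} and K_i ⊆ ℝ^{n₂} (i ∈ {1,…,S}) be cones, and let F_i ∈ ℝ^{m_i×n₁}, G_i ∈ ℝ^{m_i×n₂}, r_i ∈ ℝ^{m_i} be such that for every i the set {(x, y) ∈ K₀ × K_i : F_i x + G_i y = 0} contains only the zero vector. Suppose the connected component (X̃, (Z̃_i, Ỹ_i)_{i=1}^S), with shared block X̃ a symmetric (1+n₁)×(1+n₁) matrix, belongs to CMP(ℝ₊ × K₀, K₁,…,K_S), that the (1,1) entry of X̃ equals 0, and that for every i ∈ {1,…,S} the Frobenius inner product of the block matrix [[X̃, Z̃_iᵀ],[Z̃_i, Ỹ_i]] with the matrix (−r_i F_i G_i)ᵀ(−r_i F_i G_i) equals 0, where (−r_i F_i G_i) is the m_i×(1+n₁+n₂) matrix with column blocks −r_i, F_i, G_i. Then X̃ = 0, and Z̃_i = 0 and Ỹ_i = 0 for every i ∈ {1,…,S}. -/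

import Mathlib

open Matrix

/-- A cone: a set closed under multiplication by nonnegative scalars. -/
def IsCone {d : Type*} (K : Set (d → ℝ)) : Prop :=
  ∀ c : ℝ, 0 ≤ c → ∀ x ∈ K, c • x ∈ K

/-- The product `A × B` of sets of vectors, realized as block vectors indexed by `p ⊕ q`. -/
def SetProd {p q : Type*} (A : Set (p → ℝ)) (B : Set (q → ℝ)) : Set (p ⊕ q → ℝ) :=
  {v | (fun i => v (Sum.inl i)) ∈ A ∧ (fun j => v (Sum.inr j)) ∈ B}

/-- The Frobenius inner product `M • N = trace (Mᵀ N)` of two matrices. -/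
def frob {m n : Type*} [Fintype m] [Fintype n] (A B : Matrix m n ℝ) : ℝ :=
  Matrix.trace (Aᵀ * B)

/-- The cone `CMP(K₀, K₁, …, K_S)` of completable, completely positive connected
components: the convex hull of the tuples
`(x xᵀ, (y_i xᵀ, y_i y_iᵀ)_{i})` with `x ∈ K₀` and `y_i ∈ K_i`. -/
def CMP {ι₀ ι₁ : Type*} {S : ℕ} (K₀ : Set (ι₀ → ℝ)) (Ki : Fin S → Set (ι₁ → ℝ)) :
    Set (Matrix ι₀ ι₀ ℝ × (Fin S → Matrix ι₁ ι₀ ℝ × Matrix ι₁ ι₁ ℝ)) :=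
  convexHull ℝ {T | ∃ x ∈ K₀, ∃ y : Fin S → ι₁ → ℝ, (∀ i, y i ∈ Ki i) ∧
    T = (Matrix.vecMulVec x x,
      fun i => (Matrix.vecMulVec (y i) x, Matrix.vecMulVec (y i) (y i)))}

lemma sum_rot {κ₁ κ₂ l : Type*} [Fintype κ₁] [Fintype κ₂] [Fintype l] (f : κ₁ → κ₂ → l → ℝ) :
    ∑ x, ∑ y, ∑ i, f x y i = ∑ i, ∑ x, ∑ y, f x y i :=
  (Finset.sum_congr rfl fun _ _ => Finset.sum_comm).trans Finset.sum_comm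

lemma frob_vecMulVec {κ l : Type*} [Fintype κ] [Fintype l] (u : κ → ℝ) (A : Matrix l κ ℝ) :
    frob (Matrix.vecMulVec u u) (Aᵀ * A) = ∑ i, (A.mulVec u i)^2 := by
  simp only [frob, Matrix.trace, Matrix.diag, Matrix.mul_apply, Matrix.vecMulVec_apply, Matrix.transpose_apply,
    Matrix.mulVec, dotProduct, sq, Finset.mul_sum, Finset.sum_mul]
  rw [sum_rot]
  refine Finset.sum_congr rfl fun i _ => ?_
  rw [Finset.sum_comm]
  refine Finset.sum_congr rfl fun j _ => Finset.sum_congr rfl fun k _ => ?_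
  ring

lemma frob_sum_smul {m n ι : Type*} [Fintype m] [Fintype n] [Fintype ι]
    (w : ι → ℝ) (M : ι → Matrix m n ℝ) (B : Matrix m n ℝ) :
    frob (∑ k, w k • M k) B = ∑ k, w k * frob (M k) B := by
  simp [frob, Matrix.trace_sum, Finset.sum_mul, Matrix.transpose_sum, Matrix.sum_mul]

theorem stmt_13 (S n₁ n₂ : ℕ) (hS : 1 ≤ S) (h₁ : 1 ≤ n₁) (h₂ : 1 ≤ n₂)
    (m : Fin S → ℕ) (hm : ∀ i, 1 ≤ m i)
    (K₀ : Set (Fin n₁ → ℝ)) (hK₀ : IsCone K₀)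
    (Ki : Fin S → Set (Fin n₂ → ℝ)) (hKi : ∀ i, IsCone (Ki i))
    (F : ∀ i : Fin S, Matrix (Fin (m i)) (Fin n₁) ℝ)
    (G : ∀ i : Fin S, Matrix (Fin (m i)) (Fin n₂) ℝ)
    (r : ∀ i : Fin S, Fin (m i) → ℝ)
    (htriv : ∀ i : Fin S, ∀ x ∈ K₀, ∀ y ∈ Ki i,
      (F i).mulVec x + (G i).mulVec y = 0 → x = 0 ∧ y = 0)
    (Xt : Matrix (Fin 1 ⊕ Fin n₁) (Fin 1 ⊕ Fin n₁) ℝ)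
    (Zt : Fin S → Matrix (Fin n₂) (Fin 1 ⊕ Fin n₁) ℝ)
    (Yt : Fin S → Matrix (Fin n₂) (Fin n₂) ℝ)
    (hmem : (Xt, fun i => (Zt i, Yt i)) ∈
      CMP (SetProd {v : Fin 1 → ℝ | 0 ≤ v 0} K₀) Ki)
    (h11 : Xt (Sum.inl 0) (Sum.inl 0) = 0)
    (horth : ∀ i, frob (Matrix.fromBlocks Xt (Zt i)ᵀ (Zt i) (Yt i))
      ((Matrix.fromCols (Matrix.fromCols
          (Matrix.of fun l (_ : Fin 1) => -r i l) (F i)) (G i))ᵀ *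
        (Matrix.fromCols (Matrix.fromCols
          (Matrix.of fun l (_ : Fin 1) => -r i l) (F i)) (G i))) = 0) :
    Xt = 0 ∧ ∀ i, Zt i = 0 ∧ Yt i = 0 := by
  rw [CMP, mem_convexHull_iff_exists_fintype] at hmem
  obtain ⟨ι, hι, w, z, hw0, hw1, hz, hsum⟩ := hmem
  choose x hx y hy hzeq using hz
  simp only [hzeq] at hsum
  -- component equalities
  have hX : Xt = ∑ k, w k • Matrix.vecMulVec (x k) (x k) := by
    have h := congrArg Prod.fst hsum
    simpa [Prod.fst_sum] using h.symm
  have hZ : ∀ i, Zt i = ∑ k, w k • Matrix.vecMulVec (y k i) (x k) := by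
    intro i
    have h := congrArg (fun p => p.2 i) hsum
    simpa [Prod.snd_sum, Prod.fst_sum, Finset.sum_apply] using congrArg Prod.fst h.symm
  have hY : ∀ i, Yt i = ∑ k, w k • Matrix.vecMulVec (y k i) (y k i) := by
    intro i
    have h := congrArg (fun p => p.2 i) hsum
    simpa [Prod.snd_sum, Finset.sum_apply] using congrArg Prod.snd h.symm
  -- step A : first coordinates vanish
  have hA : ∀ k, w k ≠ 0 → x k (Sum.inl 0) = 0 := by
    intro k hk
    have e : ∑ j, w j * (x j (Sum.inl 0) * x j (Sum.inl 0)) = 0 := by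
      rw [← h11, hX]
      simp [Matrix.sum_apply, Matrix.vecMulVec_apply]
    have hnn : ∀ j ∈ Finset.univ, (0:ℝ) ≤ w j * (x j (Sum.inl 0) * x j (Sum.inl 0)) :=
      fun j _ => mul_nonneg (hw0 j) (mul_self_nonneg _)
    have := (Finset.sum_eq_zero_iff_of_nonneg hnn).mp e k (Finset.mem_univ k)
    rcases mul_eq_zero.mp this with h | h
    · exact absurd h hk
    · exact mul_self_eq_zero.mp h
  -- step B : key claim
  have key : ∀ k, w k ≠ 0 → x k = 0 ∧ ∀ i, y k i = 0 := by
    intro k hk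
    have hy0 : ∀ i, (fun j => x k (Sum.inr j)) = 0 ∧ y k i = 0 := by
      intro i
      set A := Matrix.fromCols (Matrix.fromCols
          (Matrix.of fun l (_ : Fin 1) => -r i l) (F i)) (G i) with hA'
      have hblock : Matrix.fromBlocks Xt (Zt i)ᵀ (Zt i) (Yt i) =
          ∑ j, w j • Matrix.vecMulVec (Sum.elim (x j) (y j i)) (Sum.elim (x j) (y j i)) := by
        ext a b
        rcases a with a | a <;> rcases b with b | b <;>
          simp [hX, hZ i, hY i, Matrix.sum_apply, Matrix.vecMulVec_apply, mul_comm]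
      have e : ∑ j, w j * ∑ l, (A.mulVec (Sum.elim (x j) (y j i)) l)^2 = 0 := by
        have := horth i
        rw [hblock, frob_sum_smul] at this
        simp only [frob_vecMulVec] at this
        exact this
      have hnn : ∀ j ∈ Finset.univ,
          (0:ℝ) ≤ w j * ∑ l, (A.mulVec (Sum.elim (x j) (y j i)) l)^2 :=
        fun j _ => mul_nonneg (hw0 j) (Finset.sum_nonneg fun l _ => sq_nonneg _)
      have hk0 := (Finset.sum_eq_zero_iff_of_nonneg hnn).mp e k (Finset.mem_univ k)
      have hsq : ∑ l, (A.mulVec (Sum.elim (x k) (y k i)) l)^2 = 0 := by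
        rcases mul_eq_zero.mp hk0 with h | h
        · exact absurd h hk
        · exact h
      have hmv : ∀ l, A.mulVec (Sum.elim (x k) (y k i)) l = 0 := by
        intro l
        have := (Finset.sum_eq_zero_iff_of_nonneg
          (fun l _ => sq_nonneg (A.mulVec (Sum.elim (x k) (y k i)) l))).mp hsq l (Finset.mem_univ l)
        exact (pow_eq_zero_iff two_ne_zero).mp this
      -- compute the mulVec
      have hxk : x k = Sum.elim (fun j => x k (Sum.inl j)) (fun j => x k (Sum.inr j)) := by
        funext a; rcases a with a | a <;> rfl
      have hmv2 : (F i).mulVec (fun j => x k (Sum.inr j)) + (G i).mulVec (y k i) = 0 := by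
        funext l
        have h := hmv l
        rw [hA'] at h
        rw [hxk] at h
        simp only [Matrix.fromCols_mulVec_sumElim, Pi.add_apply] at h
        have hC : (Matrix.of fun l (_ : Fin 1) => -r i l).mulVec (fun j => x k (Sum.inl j)) l = 0 := by
          simp [Matrix.mulVec, dotProduct, hA k hk]
        simp only [Pi.add_apply] at h ⊢
        rw [hC] at h
        simpa using h
      exact htriv i _ (hx k).2 _ (hy k i) hmv2
    obtain ⟨i0⟩ : Nonempty (Fin S) := ⟨⟨0, hS⟩⟩
    constructor
    · funext a
      rcases a with a | a
      · have : a = 0 := Subsingleton.elim _ _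
        rw [this]; exact hA k hk
      · exact congrFun (hy0 i0).1 a
    · exact fun i => (hy0 i).2
  refine ⟨?_, fun i => ⟨?_, ?_⟩⟩
  · rw [hX]
    apply Finset.sum_eq_zero
    intro k _
    by_cases hk : w k = 0
    · simp [hk]
    · rw [(key k hk).1]
      ext a b
      simp [Matrix.vecMulVec_apply]
  · rw [hZ i]
    apply Finset.sum_eq_zero
    intro k _
    by_cases hk : w k = 0
    · simp [hk]
    · rw [(key k hk).1]
      ext a b
      simp [Matrix.vecMulVec_apply]
  · rw [hY i]
    apply Finset.sum_eq_zero
    intro k _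
    by_cases hk : w k = 0
    · simp [hk]
    · rw [(key k hk).2 i]
      ext a b
      simp [Matrix.vecMulVec_apply]
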